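/- Let G be an AH-algebra and let g ∈ G. Then s := (g⁺)° − (g⁻)° is the unique signum of g, i.e., the unique element of G satisfying: s ∈ C(g) ∩ C(P ∩ C(g)); 0 ≤ sg = gs; g = s²g; and for all h ∈ G, gh = 0 implies sh = 0. Moreover: (i) s ∈ CC(g); (ii) g° = s²; (iii) |g| = sg = gs; (iv) g = s|g| = |g|s; (v) |g|° = g°. -/

import Mathlib

/-- An e-ring `(R,E)`: an associative ring `R` with unity together with a set `E ⊆ R`
of effects, satisfying the Foulis axioms.  `E⁺` is realized as the additive submonoid
closure of `E` (the set of all finite sums of effects). -/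
structure ERing (R : Type*) [Ring R] where
  E : Set R
  zero_mem : (0 : R) ∈ E
  one_mem : (1 : R) ∈ E
  compl_mem : ∀ e ∈ E, 1 - e ∈ E
  epos_i : ∀ a ∈ AddSubmonoid.closure E, -a ∈ AddSubmonoid.closure E → a = 0
  epos_ii : ∀ a ∈ AddSubmonoid.closure E, 1 - a ∈ AddSubmonoid.closure E → a ∈ E
  epos_iii : ∀ a ∈ AddSubmonoid.closure E, ∀ b ∈ AddSubmonoid.closure E,
    a * b = b * a → a * b ∈ AddSubmonoid.closure E
  epos_iv : ∀ a ∈ AddSubmonoid.closure E, ∀ b ∈ AddSubmonoid.closure E,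
    a * b * a ∈ AddSubmonoid.closure E
  epos_v : ∀ a ∈ AddSubmonoid.closure E, ∀ b ∈ AddSubmonoid.closure E,
    a * b * a = 0 → a * b = 0 ∧ b * a = 0
  epos_vi : ∀ a ∈ AddSubmonoid.closure E, ∀ b ∈ AddSubmonoid.closure E,
    (a - b) ^ 2 ∈ AddSubmonoid.closure E
  zero_ne_one : (0 : R) ≠ 1

namespace ERing

variable {R : Type*} [Ring R] (er : ERing R)

/-- `E⁺`, the set of all finite sums of effects; the positive cone of the directed group. -/
def Epos : Set R := (AddSubmonoid.closure er.E : Set R)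

/-- The directed group `G = E⁺ - E⁺` of the e-ring. -/
def G : Set R := {g | ∃ a ∈ er.Epos, ∃ b ∈ er.Epos, g = a - b}

/-- The partial order on the directed group: `g ≤ h` iff `h - g ∈ E⁺`. -/
def le (g h : R) : Prop := h - g ∈ er.Epos

/-- The set of projections `P = {p ∈ G : p = p²}`. -/
def P : Set R := {p | p ∈ er.G ∧ p = p ^ 2}

/-- The commutant in `G` of a subset `A ⊆ G`. -/
def commutant (A : Set R) : Set R := {g | g ∈ er.G ∧ ∀ a ∈ A, g * a = a * g}

/-- The bicommutant in `G` of a subset `A ⊆ G`. -/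
def CC (A : Set R) : Set R := er.commutant (er.commutant A)

/-- `s` is the supremum of `A` within the subset `S` (w.r.t. the e-ring order). -/
def IsSupIn (S A : Set R) (s : R) : Prop :=
  s ∈ S ∧ (∀ a ∈ A, er.le a s) ∧ ∀ b ∈ S, (∀ a ∈ A, er.le a b) → er.le s b

/-- `s` is the infimum of `A` within the subset `S` (w.r.t. the e-ring order). -/
def IsInfIn (S A : Set R) (s : R) : Prop :=
  s ∈ S ∧ (∀ a ∈ A, er.le s a) ∧ ∀ b ∈ S, (∀ a ∈ A, er.le b a) → er.le b s

/-- Quadratic annihilation property. -/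
def HasQA : Prop := ∀ g ∈ er.G, ∀ h ∈ er.G, g * h ^ 2 * g = 0 → g * h = 0 ∧ h * g = 0

/-- Commutative Vigier property: every ascending sequence of pairwise commuting elements
of `G` bounded above in `G` has a supremum in `G` which double commutes with the sequence. -/
def HasCV : Prop :=
  ∀ g : ℕ → R, (∀ n, g n ∈ er.G) → (∀ n, er.le (g n) (g (n + 1))) →
    (∀ m n, g m * g n = g n * g m) → (∃ b ∈ er.G, ∀ n, er.le (g n) b) →
    ∃ s, er.IsSupIn er.G (Set.range g) s ∧ s ∈ er.CC (Set.range g)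

/-- `G` is an abstract Hermitian (AH) algebra: there is a semitransparent effect `½`,
`G` has quadratic annihilation, and `G` has the commutative Vigier property. -/
def IsAH : Prop := (∃ h ∈ er.E, h + h = 1) ∧ er.HasQA ∧ er.HasCV

end ERing

namespace ERing

variable {R : Type*} [Ring R] (er : ERing R)

/-- `m` is the absolute value `|g| = (g²)^(1/2)` of `g`: `m ∈ G`, `0 ≤ m`, `m² = g²`. -/
def IsAbs (g m : R) : Prop := m ∈ er.G ∧ er.le 0 m ∧ m ^ 2 = g ^ 2

/-- `a` is the positive part `g⁺ = ½(|g| + g)` of `g`, i.e. `a ∈ G` and `a + a = |g| + g`. -/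
def IsPosPart (g a : R) : Prop := a ∈ er.G ∧ ∃ m, er.IsAbs g m ∧ a + a = m + g

/-- `b` is the negative part `g⁻ = ½(|g| − g)` of `g`, i.e. `b ∈ G` and `b + b = |g| − g`. -/
def IsNegPart (g b : R) : Prop := b ∈ er.G ∧ ∃ m, er.IsAbs g m ∧ b + b = m - g

/-- `p` is the carrier projection `g°` of `g`. -/
def IsCarrier (g p : R) : Prop := p ∈ er.P ∧ ∀ h ∈ er.G, (g * h = 0 ↔ p * h = 0)

end ERing

namespace ERing

variable {R : Type*} [Ring R] (er : ERing R)

/-- `s` is a signum of `g`: `s ∈ C(g) ∩ CPC(g)`, `0 ≤ sg = gs`, `g = s²g`, and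
`gh = 0` implies `sh = 0` for all `h ∈ G`. -/
def IsSignum (g s : R) : Prop :=
  s ∈ er.commutant {g} ∧ s ∈ er.commutant (er.P ∩ er.commutant {g}) ∧
  er.le 0 (s * g) ∧ s * g = g * s ∧ g = s ^ 2 * g ∧
  ∀ h ∈ er.G, g * h = 0 → s * h = 0

end ERing


namespace ERing

variable {R : Type*} [Ring R] {er : ERing R}

lemma Epos.zero : (0:R) ∈ er.Epos := (AddSubmonoid.closure er.E).zero_mem

lemma Epos.ofE {x : R} (hx : x ∈ er.E) : x ∈ er.Epos := AddSubmonoid.subset_closure hx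

lemma Epos.one : (1:R) ∈ er.Epos := Epos.ofE er.one_mem

lemma Epos.add {x y : R} (hx : x ∈ er.Epos) (hy : y ∈ er.Epos) : x + y ∈ er.Epos :=
  (AddSubmonoid.closure er.E).add_mem hx hy

lemma G.ofEpos {x : R} (hx : x ∈ er.Epos) : x ∈ er.G :=
  ⟨x, hx, 0, Epos.zero, by rw [sub_zero]⟩

lemma G.zero : (0:R) ∈ er.G := G.ofEpos Epos.zero

lemma G.one : (1:R) ∈ er.G := G.ofEpos Epos.one

lemma G.add {x y : R} (hx : x ∈ er.G) (hy : y ∈ er.G) : x + y ∈ er.G := by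
  obtain ⟨a, ha, b, hb, rfl⟩ := hx
  obtain ⟨c, hc, d, hd, rfl⟩ := hy
  exact ⟨a + c, Epos.add ha hc, b + d, Epos.add hb hd, by abel⟩

lemma G.neg {x : R} (hx : x ∈ er.G) : -x ∈ er.G := by
  obtain ⟨a, ha, b, hb, rfl⟩ := hx
  exact ⟨b, hb, a, ha, by abel⟩

lemma G.sub {x y : R} (hx : x ∈ er.G) (hy : y ∈ er.G) : x - y ∈ er.G := by
  rw [sub_eq_add_neg]; exact G.add hx (G.neg hy)

lemma Epos.sq {x : R} (hx : x ∈ er.G) : x * x ∈ er.Epos := by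
  obtain ⟨a, ha, b, hb, rfl⟩ := hx
  have := er.epos_vi a ha b hb
  rwa [pow_two] at this

lemma Epos.eq_zero {x : R} (h1 : x ∈ er.Epos) (h2 : -x ∈ er.Epos) : x = 0 :=
  er.epos_i x h1 h2

lemma Epos.mul_comm {x y : R} (hx : x ∈ er.Epos) (hy : y ∈ er.Epos)
    (hc : x * y = y * x) : x * y ∈ er.Epos := er.epos_iii x hx y hy hc

lemma Epos.conj {x y : R} (hx : x ∈ er.Epos) (hy : y ∈ er.Epos) :
    x * y * x ∈ er.Epos := er.epos_iv x hx y hy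

section Half

variable {h : R}

lemma half_add (h2 : h + h = 1) (x : R) : h * x + h * x = x := by
  have : h * x + h * x = (h + h) * x := by noncomm_ring
  rw [this, h2, one_mul]

lemma half_add' (h2 : h + h = 1) (x : R) : x * h + x * h = x := by
  have : x * h + x * h = x * (h + h) := by noncomm_ring
  rw [this, h2, mul_one]

lemma two_cancel (h2 : h + h = 1) {x y : R} (hxy : x + x = y + y) : x = y := by
  have hx : h * (x + x) = x := by rw [mul_add, half_add h2]
  have hy : h * (y + y) = y := by rw [mul_add, half_add h2]
  rw [← hx, hxy, hy]

lemma h_comm (h2 : h + h = 1) (x : R) : h * x = x * h := by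
  apply two_cancel h2
  rw [half_add h2, half_add' h2]

lemma half_Epos (h2 : h + h = 1) (hE : h ∈ er.E) {x : R} (hx : x ∈ er.Epos) :
    h * x ∈ er.Epos := by
  have h1 : h * x * h ∈ er.Epos := Epos.conj (Epos.ofE hE) hx
  have : h * x = h * x * h + h * x * h := (half_add' h2 (h * x)).symm
  rw [this]
  exact Epos.add h1 h1

lemma half_G (h2 : h + h = 1) (hE : h ∈ er.E) {x : R} (hx : x ∈ er.G) :
    h * x ∈ er.G := by
  obtain ⟨a, ha, b, hb, rfl⟩ := hx
  exact ⟨h * a, half_Epos h2 hE ha, h * b, half_Epos h2 hE hb, by noncomm_ring⟩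

lemma G.mul_comm (h2 : h + h = 1) (hE : h ∈ er.E) {x y : R} (hx : x ∈ er.G)
    (hy : y ∈ er.G) (hc : x * y = y * x) : x * y ∈ er.G := by
  have key : x * y + x * y = (x + y) * (x + y) - x * x - y * y := by
    rw [add_mul, mul_add, mul_add, hc]; abel
  have hG : (x + y) * (x + y) - x * x - y * y ∈ er.G :=
    G.sub (G.sub (G.ofEpos (Epos.sq (G.add hx hy))) (G.ofEpos (Epos.sq hx)))
      (G.ofEpos (Epos.sq hy))
  have : x * y = h * ((x + y) * (x + y) - x * x - y * y) := by
    rw [← key, mul_add, half_add h2]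
  rw [this]
  exact half_G h2 hE hG

end Half

section QA

variable (hqa : er.HasQA)

lemma mul_zero_symm (hqa : er.HasQA) {x y : R} (hx : x ∈ er.G) (hy : y ∈ er.G)
    (hxy : x * y = 0) : y * x = 0 := by
  have key : y * x ^ 2 * y = 0 := by
    rw [pow_two, ← mul_assoc, mul_assoc (y*x) x y, hxy, mul_zero]
  exact ((hqa y hy x hx key).2 : x * y = 0) ▸ (hqa y hy x hx key).1

lemma sq_zero (hqa : er.HasQA) {x : R} (hx : x ∈ er.G) (hxx : x * x = 0) : x = 0 := by
  have key : x * (1:R) ^ 2 * x = 0 := by rw [one_pow, mul_one, hxx]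
  have := (hqa x hx 1 G.one key).1
  rwa [mul_one] at this

end QA

section Proj

lemma P.Epos {p : R} (hp : p ∈ er.P) : p ∈ er.Epos := by
  obtain ⟨hG, hidem⟩ := hp
  have : p * p ∈ er.Epos := Epos.sq hG
  rw [hidem, pow_two]
  exact this

lemma P.one_sub {p : R} (hp : p ∈ er.P) : (1 - p) ∈ er.P := by
  obtain ⟨hG, hidem⟩ := hp
  refine ⟨G.sub G.one hG, ?_⟩
  have e : (1 - p)^2 = 1 - p - p + p * p := by noncomm_ring
  rw [e, ← pow_two, ← hidem]
  abel

lemma P.idem {p : R} (hp : p ∈ er.P) : p * p = p := by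
  rw [← pow_two]; exact hp.2.symm

end Proj


section Carrier

lemma Carrier.mul_p {c p : R} (hcp : er.IsCarrier c p) : c * p = c := by
  have h1 : p * (1 - p) = 0 := by rw [mul_sub, mul_one, P.idem hcp.1, sub_self]
  have h2 : c * (1 - p) = 0 := (hcp.2 (1 - p) (G.sub G.one hcp.1.1)).2 h1
  rw [mul_sub, mul_one, sub_eq_zero] at h2
  exact h2.symm

lemma Carrier.p_mul (hqa : er.HasQA) {c p : R} (hcG : c ∈ er.G)
    (hcp : er.IsCarrier c p) : p * c = c := by
  have h2 : c * (1 - p) = 0 := by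
    rw [mul_sub, mul_one, Carrier.mul_p hcp, sub_self]
  have h3 : (1 - p) * c = 0 := mul_zero_symm hqa hcG (G.sub G.one hcp.1.1) h2
  rw [sub_mul, one_mul, sub_eq_zero] at h3
  exact h3.symm

lemma Carrier.right_iff (hqa : er.HasQA) {c p : R} (hcG : c ∈ er.G)
    (hcp : er.IsCarrier c p) {x : R} (hx : x ∈ er.G) : x * c = 0 ↔ x * p = 0 := by
  have hpG := hcp.1.1
  constructor
  · intro hxc
    have := mul_zero_symm hqa hx hcG hxc
    have := (hcp.2 x hx).1 this
    exact mul_zero_symm hqa hcp.1.1 hx this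
  · intro hxp
    have := mul_zero_symm hqa hx hpG hxp
    have := (hcp.2 x hx).2 this
    exact mul_zero_symm hqa hcG hx this

lemma Carrier.unique (hqa : er.HasQA) {c p q : R} (hcp : er.IsCarrier c p)
    (hcq : er.IsCarrier c q) : p = q := by
  have hpG := hcp.1.1
  have hqG := hcq.1.1
  have hqp : q * p = q := by
    have h1 : p * (1 - p) = 0 := by rw [mul_sub, mul_one, P.idem hcp.1, sub_self]
    have h2 : c * (1 - p) = 0 := (hcp.2 (1 - p) (G.sub G.one hpG)).2 h1
    have h3 : q * (1 - p) = 0 := (hcq.2 (1 - p) (G.sub G.one hpG)).1 h2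
    rw [mul_sub, mul_one, sub_eq_zero] at h3
    exact h3.symm
  have hpq : p * q = p := by
    have h1 : q * (1 - q) = 0 := by rw [mul_sub, mul_one, P.idem hcq.1, sub_self]
    have h2 : c * (1 - q) = 0 := (hcq.2 (1 - q) (G.sub G.one hqG)).2 h1
    have h3 : p * (1 - q) = 0 := (hcp.2 (1 - q) (G.sub G.one hqG)).1 h2
    rw [mul_sub, mul_one, sub_eq_zero] at h3
    exact h3.symm
  have key : (p - q) * (p - q) = 0 := by
    have e : (p - q) * (p - q) = p * p - p * q - q * p + q * q := by noncomm_ring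
    rw [e, P.idem hcp.1, P.idem hcq.1, hpq, hqp]
    abel
  have := sq_zero hqa (G.sub hpG hqG) key
  rwa [sub_eq_zero] at this

end Carrier

section Bound

lemma Epos.natCast (n : ℕ) : ((n : R)) ∈ er.Epos := by
  induction n with
  | zero => simpa using (Epos.zero : (0:R) ∈ er.Epos)
  | succ k ih =>
      push_cast
      exact Epos.add ih Epos.one

lemma Epos.bound {x : R} (hx : x ∈ er.Epos) : ∃ N : ℕ, (N : R) - x ∈ er.Epos := by
  have hx' : x ∈ AddSubmonoid.closure er.E := hx
  induction hx' using AddSubmonoid.closure_induction with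
  | mem y hy =>
      exact ⟨1, by simpa using (Epos.ofE (er.compl_mem y hy) : (1:R) - y ∈ er.Epos)⟩
  | zero => exact ⟨0, by simpa using (Epos.zero : (0:R) ∈ er.Epos)⟩
  | add y z hy hz ihy ihz =>
      obtain ⟨N1, h1⟩ := ihy hy
      obtain ⟨N2, h2⟩ := ihz hz
      refine ⟨N1 + N2, ?_⟩
      have e : ((N1 + N2 : ℕ) : R) - (y + z) = ((N1:R) - y) + ((N2:R) - z) := by
        push_cast; abel
      rw [e]
      exact Epos.add h1 h2

end Bound



section Sqrt

variable {h : R}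

lemma sqrt_base (h2 : h + h = 1) (hE : h ∈ er.E) (hcv : er.HasCV)
    {k : R} (hk : k ∈ er.Epos) (hk1 : 1 - k ∈ er.Epos) :
    ∃ s, s ∈ er.Epos ∧ s * s = k ∧ ∀ x ∈ er.G, x * k = k * x → x * s = s * x := by
  set t : ℕ → R :=
    fun n => Nat.rec (motive := fun _ => R) 0 (fun _ tn => h * ((1 - k) + tn * tn)) n with ht
  have t0 : t 0 = 0 := rfl
  have tsucc : ∀ n, t (n + 1) = h * ((1 - k) + t n * t n) := fun n => rfl
  -- commutation
  have tcomm : ∀ x : R, x * k = k * x → ∀ n, x * t n = t n * x := by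
    intro x hx n
    induction n with
    | zero => rw [t0, mul_zero, zero_mul]
    | succ n ih =>
        rw [tsucc]
        have hcx := h_comm h2 x
        have e1 : x * (t n * t n) = (t n * t n) * x := by
          rw [← mul_assoc, ih, mul_assoc, ih, mul_assoc]
        have e2 : x * ((1 - k) + t n * t n) = ((1 - k) + t n * t n) * x := by
          rw [mul_add, add_mul, e1, mul_sub, sub_mul, mul_one, one_mul, hx]
        rw [← mul_assoc, ← hcx, mul_assoc, e2, mul_assoc]
  have tk : ∀ n, k * t n = t n * k := fun n => tcomm k rfl n
  have tt : ∀ m n, t m * t n = t n * t m := fun m n => tcomm (t m) (tk m).symm n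
  have tEpos : ∀ n, t n ∈ er.Epos := by
    intro n
    induction n with
    | zero => rw [t0]; exact Epos.zero
    | succ n ih =>
        rw [tsucc]
        exact half_Epos h2 hE (Epos.add hk1 (Epos.mul_comm ih ih rfl))
  have tG : ∀ n, t n ∈ er.G := fun n => G.ofEpos (tEpos n)
  have tle1 : ∀ n, 1 - t n ∈ er.Epos := by
    intro n
    induction n with
    | zero => rw [t0, sub_zero]; exact Epos.one
    | succ n ih =>
        have hsum : h * (k + (1 - t n * t n)) + h * ((1 - k) + t n * t n) = 1 := by
          rw [← mul_add]
          have e : (k + (1 - t n * t n)) + ((1 - k) + t n * t n) = 1 + 1 := by abel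
          rw [e, mul_add, mul_one, h2]
        have e2 : 1 - t (n + 1) = h * (k + (1 - t n * t n)) := by
          rw [tsucc]
          exact (eq_sub_of_add_eq hsum).symm
        rw [e2]
        have hfac : (1 - t n) * (1 + t n) = 1 - t n * t n := by noncomm_ring
        have hfac' : (1 + t n) * (1 - t n) = 1 - t n * t n := by noncomm_ring
        exact half_Epos h2 hE (Epos.add hk
          (hfac ▸ Epos.mul_comm ih (Epos.add Epos.one (tEpos n)) (hfac.trans hfac'.symm)))
  have tmono : ∀ n, t (n + 1) - t n ∈ er.Epos := by
    intro n
    induction n with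
    | zero =>
        rw [tsucc, t0, sub_zero, mul_zero, add_zero]
        exact half_Epos h2 hE hk1
    | succ n ih =>
        have c : t n * t (n + 1) = t (n + 1) * t n := tt n (n + 1)
        have e0 : (t (n+1) - t n) * (t (n+1) + t n)
            = (t (n+1) * t (n+1) - t n * t n) + (t (n+1) * t n - t n * t (n+1)) := by
          noncomm_ring
        have e : (t (n+1) - t n) * (t (n+1) + t n) = t (n+1) * t (n+1) - t n * t n := by
          rw [e0, c]; abel
        have e0' : (t (n+1) + t n) * (t (n+1) - t n)
            = (t (n+1) * t (n+1) - t n * t n) + (t n * t (n+1) - t (n+1) * t n) := by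
          noncomm_ring
        have e' : (t (n+1) + t n) * (t (n+1) - t n) = t (n+1) * t (n+1) - t n * t n := by
          rw [e0', c]; abel
        have hm : (t (n+1) - t n) * (t (n+1) + t n) ∈ er.Epos :=
          Epos.mul_comm ih (Epos.add (tEpos (n+1)) (tEpos n)) (e.trans e'.symm)
        have e2 : t (n + 2) - t (n + 1)
            = h * ((t (n+1) - t n) * (t (n+1) + t n)) := by
          rw [e, tsucc (n+1), tsucc n, ← mul_sub]
          congr 1
          abel
        rw [e2]
        exact half_Epos h2 hE hm
  -- apply CV
  obtain ⟨w, hsup, hwcc⟩ := hcv t tG (fun n => tmono n) tt ⟨1, G.one, fun n => tle1 n⟩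
  have hwG : w ∈ er.G := hsup.1
  have hub : ∀ n, w - t n ∈ er.Epos := fun n => hsup.2.1 (t n) ⟨n, rfl⟩
  have hleast : ∀ u ∈ er.G, (∀ n, u - t n ∈ er.Epos) → u - w ∈ er.Epos :=
    fun u hu hn => hsup.2.2 u hu (by rintro x ⟨n, rfl⟩; exact hn n)
  have wk : w * k = k * w :=
    hwcc.2 k ⟨G.ofEpos hk, by rintro x ⟨n, rfl⟩; exact tk n⟩
  have wt : ∀ n, w * t n = t n * w := fun n =>
    hwcc.2 (t n) ⟨tG n, by rintro x ⟨m, rfl⟩; exact tt n m⟩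
  have wEpos : w ∈ er.Epos := by have := hub 0; rwa [t0, sub_zero] at this
  have wle1 : 1 - w ∈ er.Epos := hleast 1 G.one (fun n => tle1 n)
  have wsq : w * w ∈ er.Epos := Epos.sq hwG
  -- key1 : r - t n ^2 positive, r := w + w - (1-k)
  have key1 : ∀ n, (w + w - (1 - k)) - t n * t n ∈ er.Epos := by
    intro n
    have e2 : t (n+1) + t (n+1) = (1 - k) + t n * t n := by
      rw [tsucc]; exact half_add h2 _
    have e : (w - t (n+1)) + (w - t (n+1)) = (w + w - (1 - k)) - t n * t n := by
      have e3 : (w - t (n+1)) + (w - t (n+1)) = w + w - (t (n+1) + t (n+1)) := by abel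
      rw [e3, e2]; abel
    rw [← e]
    exact Epos.add (hub (n+1)) (hub (n+1))
  -- product expansions with w
  have wdiff_mul : ∀ n, (w - t n) * (w + t n) = w * w - t n * t n := by
    intro n
    have e0 : (w - t n) * (w + t n)
        = (w * w - t n * t n) + (w * t n - t n * w) := by noncomm_ring
    rw [e0, wt n]; abel
  have wdiff_mul' : ∀ n, (w + t n) * (w - t n) = w * w - t n * t n := by
    intro n
    have e0 : (w + t n) * (w - t n)
        = (w * w - t n * t n) + (t n * w - w * t n) := by noncomm_ring
    rw [e0, wt n]; abel
  have hub2 : ∀ n, h * ((1 - k) + w * w) - t n ∈ er.Epos := by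
    intro n
    cases n with
    | zero =>
        rw [t0, sub_zero]
        exact half_Epos h2 hE (Epos.add hk1 wsq)
    | succ n =>
        have e : h * ((1 - k) + w * w) - t (n+1) = h * ((w - t n) * (w + t n)) := by
          rw [wdiff_mul n, tsucc, ← mul_sub]
          congr 1
          abel
        rw [e]
        exact half_Epos h2 hE
          ((wdiff_mul n) ▸ Epos.mul_comm (hub n) (Epos.add wEpos (tEpos n))
            ((wdiff_mul n).trans (wdiff_mul' n).symm))
  have hwle : h * ((1 - k) + w * w) - w ∈ er.Epos :=
    hleast _ (half_G h2 hE (G.add (G.ofEpos hk1) (G.ofEpos wsq))) hub2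
  set d : R := w * w - (w + w - (1 - k)) with hd
  clear_value d
  have dG : d ∈ er.G := by
    rw [hd]
    exact G.sub (G.ofEpos wsq) (G.sub (G.add hwG hwG) (G.ofEpos hk1))
  have dEpos : d ∈ er.Epos := by
    have e : (h * ((1 - k) + w * w) - w) + (h * ((1 - k) + w * w) - w) = d := by
      have e3 : (h * ((1 - k) + w * w) - w) + (h * ((1 - k) + w * w) - w)
          = (h * ((1 - k) + w * w) + h * ((1 - k) + w * w)) - (w + w) := by abel
      rw [e3, half_add h2, hd]; abel
    rw [← e]
    exact Epos.add hwle hwle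
  have key3 : ∀ n, ((w - t n) + (w - t n)) - d ∈ er.Epos := by
    intro n
    have expand : (w - t n) * ((1 - w) + (1 - t n))
        = (w + w - t n - t n - w * w + t n * t n) + (t n * w - w * t n) := by
      noncomm_ring
    have expand2 : (w - t n) * ((1 - w) + (1 - t n))
        = w + w - t n - t n - w * w + t n * t n := by
      rw [expand, wt n]; abel
    have expand' : ((1 - w) + (1 - t n)) * (w - t n)
        = (w + w - t n - t n - w * w + t n * t n) + (w * t n - t n * w) := by
      noncomm_ring
    have expand2' : ((1 - w) + (1 - t n)) * (w - t n)
        = w + w - t n - t n - w * w + t n * t n := by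
      rw [expand', wt n]; abel
    have hprod : (w - t n) * ((1 - w) + (1 - t n)) ∈ er.Epos :=
      Epos.mul_comm (hub n) (Epos.add wle1 (tle1 n)) (expand2.trans expand2'.symm)
    have iden : ((w - t n) + (w - t n)) - d
        = ((w + w - (1 - k)) - t n * t n) + ((w - t n) * ((1 - w) + (1 - t n))) := by
      rw [expand2, hd]; abel
    rw [iden]
    exact Epos.add (key1 n) hprod
  have tnle : ∀ n, (w - h * d) - t n ∈ er.Epos := by
    intro n
    have e : (w - h * d) - t n = h * (((w - t n) + (w - t n)) - d) := by
      rw [mul_sub, mul_add, half_add h2 (w - t n)]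
      abel
    rw [e]
    exact half_Epos h2 hE (key3 n)
  have hwle2 : (w - h * d) - w ∈ er.Epos :=
    hleast _ (G.sub hwG (half_G h2 hE dG)) tnle
  have hdz : h * d = 0 := by
    apply Epos.eq_zero (half_Epos h2 hE dEpos)
    have e : (w - h * d) - w = -(h * d) := by abel
    rwa [e] at hwle2
  have hd0 : d = 0 := by
    have := half_add h2 d
    rw [hdz, add_zero] at this
    exact this.symm
  have hww : w * w = w + w - (1 - k) := by
    have : w * w - (w + w - (1 - k)) = 0 := hd ▸ hd0
    rwa [sub_eq_zero] at this
  refine ⟨1 - w, wle1, ?_, ?_⟩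
  · have e : (1 - w) * (1 - w) = 1 - w - w + w * w := by noncomm_ring
    rw [e, hww]; abel
  · intro x hx hkx
    have hxw : w * x = x * w :=
      hwcc.2 x ⟨hx, by rintro y ⟨n, rfl⟩; exact tcomm x hkx n⟩
    rw [mul_sub, sub_mul, mul_one, one_mul, hxw]

end Sqrt

section SqrtFull

variable {h : R}

lemma sqrt_scaled (h2 : h + h = 1) (hE : h ∈ er.E) (hcv : er.HasCV) :
    ∀ j : ℕ, ∀ k : R, k ∈ er.Epos → (4:R)^j - k ∈ er.Epos →
      ∃ s, s ∈ er.Epos ∧ s * s = k ∧ ∀ x ∈ er.G, x * k = k * x → x * s = s * x := by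
  have hhalf : ∀ y : R, h * (y + y) = y := fun y => by rw [mul_add]; exact half_add h2 y
  intro j
  induction j with
  | zero =>
      intro k hk hk4
      rw [pow_zero] at hk4
      exact sqrt_base h2 hE hcv hk hk4
  | succ j ih =>
      intro k hk hk4
      have h4 : ∀ y : R, h * (h * (4 * y)) = y := by
        intro y
        have e1 : (4:R) * y = (y + y) + (y + y) := by noncomm_ring
        rw [e1, hhalf, hhalf]
      set k' : R := h * (h * k) with hk'def
      have hk' : k' ∈ er.Epos := half_Epos h2 hE (half_Epos h2 hE hk)
      have e : (4:R)^j - k' = h * (h * ((4:R)^(j+1) - k)) := by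
        rw [mul_sub, mul_sub, hk'def]
        congr 1
        rw [show ((4:R))^(j+1) = 4 * 4^j from pow_succ' 4 j]
        · exact (h4 ((4:R)^j)).symm
      have hk4' : (4:R)^j - k' ∈ er.Epos := by
        rw [e]; exact half_Epos h2 hE (half_Epos h2 hE hk4)
      obtain ⟨s', hs'0, hs'sq, hs'cc⟩ := ih k' hk' hk4'
      refine ⟨s' + s', Epos.add hs'0 hs'0, ?_, ?_⟩
      · have e2 : (s' + s') * (s' + s')
            = ((s' * s') + (s' * s')) + ((s' * s') + (s' * s')) := by noncomm_ring
        rw [e2, hs'sq, hk'def, half_add h2 (h * k), half_add h2 k]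
      · intro x hx hkx
        have cA : ∀ y : R, x * (h * y) = h * (x * y) := fun y => by
          rw [← mul_assoc, ← h_comm h2 x, mul_assoc]
        have hxk' : x * k' = k' * x := by
          rw [hk'def, cA, cA, hkx, mul_assoc, mul_assoc]
        have := hs'cc x hx hxk'
        rw [mul_add, add_mul, this]

lemma sqrt_exists (h2 : h + h = 1) (hE : h ∈ er.E) (hcv : er.HasCV)
    {k : R} (hk : k ∈ er.Epos) :
    ∃ s, s ∈ er.Epos ∧ s * s = k ∧ ∀ x ∈ er.G, x * k = k * x → x * s = s * x := by
  obtain ⟨N, hN⟩ := Epos.bound hk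
  have hle : N ≤ 4^N := le_of_lt (Nat.lt_pow_self (by norm_num : 1 < 4) : N < 4^N)
  have e : (4:R)^N - k = ((4^N - N : ℕ) : R) + ((N:R) - k) := by
    rw [Nat.cast_sub hle]
    push_cast
    abel
  exact sqrt_scaled h2 hE hcv N k hk (e ▸ Epos.add (Epos.natCast _) hN)

lemma sqrt_unique (hqa : er.HasQA) {k m s : R} (hmG : m ∈ er.G) (hm0 : m ∈ er.Epos)
    (hmk : m * m = k) (hs0 : s ∈ er.Epos) (hsk : s * s = k)
    (hscc : ∀ x ∈ er.G, x * k = k * x → x * s = s * x) : m = s := by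
  have hsG : s ∈ er.G := G.ofEpos hs0
  have hms : m * s = s * m := by
    refine hscc m hmG ?_
    rw [← hmk, ← mul_assoc, mul_assoc]
  set u : R := m - s with hu
  have uG : u ∈ er.G := G.sub hmG hsG
  have hu1 : u * (m + s) = 0 := by
    have e : (m - s) * (m + s) = (m * m - s * s) + (m * s - s * m) := by noncomm_ring
    rw [hu, e, hms, hmk, hsk]
    abel
  have huu : u * u ∈ er.Epos := Epos.sq uG
  have hum : u * m = m * u := by rw [hu, sub_mul, mul_sub, hms]
  have hus : u * s = s * u := by rw [hu, sub_mul, mul_sub, hms]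
  have c1 : (u * u) * m = m * (u * u) := by
    rw [mul_assoc, hum, ← mul_assoc, hum, mul_assoc]
  have c2 : (u * u) * s = s * (u * u) := by
    rw [mul_assoc, hus, ← mul_assoc, hus, mul_assoc]
  have hApos : (u * u) * m ∈ er.Epos := Epos.mul_comm huu hm0 c1
  have hBpos : (u * u) * s ∈ er.Epos := Epos.mul_comm huu hs0 c2
  have hsum : (u * u) * m + (u * u) * s = 0 := by
    rw [← mul_add, mul_assoc, hu1, mul_zero]
  have hA0 : (u * u) * m = 0 := by
    refine Epos.eq_zero hApos ?_
    have : -((u * u) * m) = (u * u) * s := neg_eq_of_add_eq_zero_left (by rw [add_comm]; exact hsum)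
    rw [this]
    exact hBpos
  have hB0 : (u * u) * s = 0 := by
    rw [← hsum, hA0, zero_add]
  have huuu : (u * u) * (u * u) = 0 := by
    have e : (u * u) * u = 0 := by
      rw [show (u:R) * u * u = u * u * m - u * u * s from by rw [← mul_sub, hu], hA0, hB0, sub_zero]
    rw [show (u:R) * u * (u * u) = ((u * u) * u) * u from by noncomm_ring, e, zero_mul]
  have hu0 : u = 0 := sq_zero hqa uG (sq_zero hqa (G.ofEpos huu) huuu)
  rw [← sub_eq_zero, ← hu]
  exact hu0

lemma abs_canon (h2 : h + h = 1) (hE : h ∈ er.E) (hqa : er.HasQA) (hcv : er.HasCV)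
    {g m : R} (hg : g ∈ er.G) (hm : er.IsAbs g m) :
    (∀ n, n ∈ er.G → n ∈ er.Epos → n * n = g * g → n = m) ∧ m * g = g * m ∧
      (∀ x ∈ er.G, x * g = g * x → x * m = m * x) := by
  obtain ⟨s, hs0, hssq, hscc⟩ := sqrt_exists h2 hE hcv (Epos.sq hg)
  have hm0 : m ∈ er.Epos := by
    have h0 : m - 0 ∈ er.Epos := hm.2.1
    rwa [sub_zero] at h0
  have hmk : m * m = g * g := by
    have := hm.2.2
    rwa [pow_two, pow_two] at this
  have hmseq : m = s := sqrt_unique hqa hm.1 hm0 hmk hs0 hssq hscc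
  have hgg : g * (g * g) = (g * g) * g := by rw [mul_assoc]
  refine ⟨?_, ?_, ?_⟩
  · intro n hnG hn0 hnk
    rw [hmseq]
    exact sqrt_unique hqa hnG hn0 hnk hs0 hssq hscc
  · rw [hmseq]
    exact (hscc g hg hgg).symm
  · intro x hx hxg
    rw [hmseq]
    exact hscc x hx (by rw [← mul_assoc, hxg, mul_assoc, hxg, mul_assoc])

end SqrtFull

section CarrierComm

lemma Carrier.comm (hqa : er.HasQA) {c p x : R} (hcG : c ∈ er.G)
    (hcp : er.IsCarrier c p) (hx : x ∈ er.G) (hxc : x * c = c * x) : p * x = x * p := by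
  have hpG : p ∈ er.G := hcp.1.1
  have hpE : p ∈ er.Epos := P.Epos hcp.1
  have hp1E : (1:R) - p ∈ er.Epos := P.Epos (P.one_sub hcp.1)
  have hpidem : p * p = p := P.idem hcp.1
  have hcpp : c * p = c := Carrier.mul_p hcp
  have hconj : ∀ e : R, e ∈ er.Epos → e * x * e ∈ er.G := by
    intro e he
    obtain ⟨x1, hx1, x2, hx2, hxeq⟩ := hx
    rw [hxeq]
    have e2 : e * (x1 - x2) * e = e * x1 * e - e * x2 * e := by noncomm_ring
    rw [e2]
    exact G.sub (G.ofEpos (Epos.conj he hx1)) (G.ofEpos (Epos.conj he hx2))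
  set d : R := p * x * (1 - p) + (1 - p) * x * p with hd
  have hdG : d ∈ er.G := by
    have e : d = x - (p * x * p + (1 - p) * x * (1 - p)) := by rw [hd]; noncomm_ring
    rw [e]
    exact G.sub hx (G.add (hconj p hpE) (hconj (1 - p) hp1E))
  have hc1p : c * (1 - p) = 0 := by rw [mul_sub, mul_one, hcpp, sub_self]
  have hcd : c * d = 0 := by
    have e1 : c * (p * x * (1 - p)) = x * (c * (1 - p)) := by
      rw [show c * (p * x * (1 - p)) = (c * p) * x * (1 - p) from by noncomm_ring, hcpp, ← hxc]
      noncomm_ring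
    have e2 : c * ((1 - p) * x * p) = (c * (1 - p)) * (x * p) := by noncomm_ring
    rw [hd, mul_add, e1, e2, hc1p, mul_zero, zero_mul, add_zero]
  have hpd : p * d = 0 := (hcp.2 d hdG).1 hcd
  have hdp : d * p = 0 := mul_zero_symm hqa hpG hdG hpd
  have hp1p : p * (1 - p) = 0 := by rw [mul_sub, mul_one, hpidem, sub_self]
  have h1pp : (1 - p) * p = 0 := by rw [sub_mul, one_mul, hpidem, sub_self]
  have hpxp : p * x * (1 - p) = 0 := by
    have e : p * d = p * x * (1 - p) := by
      rw [hd, mul_add, show p * (p * x * (1 - p)) = (p * p) * x * (1 - p) from by noncomm_ring,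
        hpidem, show p * ((1 - p) * x * p) = (p * (1 - p)) * (x * p) from by noncomm_ring,
        hp1p, zero_mul, add_zero]
    rw [← e, hpd]
  have hxpp : (1 - p) * x * p = 0 := by
    have e : d * p = (1 - p) * x * p := by
      rw [hd, add_mul, show p * x * (1 - p) * p = (p * x) * ((1 - p) * p) from by noncomm_ring,
        h1pp, mul_zero, show (1 - p) * x * p * p = (1 - p) * x * (p * p) from by noncomm_ring,
        hpidem, zero_add]
    rw [← e, hdp]
  have h1 : p * x = p * x * p := by
    rw [mul_sub, mul_one] at hpxp
    exact sub_eq_zero.mp hpxp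
  have h2 : x * p = p * x * p := by
    rw [sub_mul, one_mul, sub_mul] at hxpp
    exact sub_eq_zero.mp hxpp
  rw [h1, h2]

end CarrierComm

end ERing


/-- In an AH-algebra, `s := (g⁺)° − (g⁻)°` is the unique signum of
`g`; moreover `s ∈ CC(g)`, `g° = s²`, `|g| = sg = gs`, `g = s|g| = |g|s`, and
`|g|° = g°`. -/
theorem stmt10 {R : Type*} [Ring R] (er : ERing R) (hAH : er.IsAH)
    (g m a b pa pb pg pm : R) (hg : g ∈ er.G) (hm : er.IsAbs g m)
    (ha : er.IsPosPart g a) (hb : er.IsNegPart g b)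
    (hpa : er.IsCarrier a pa) (hpb : er.IsCarrier b pb)
    (hpg : er.IsCarrier g pg) (hpm : er.IsCarrier m pm) :
    er.IsSignum g (pa - pb) ∧ (∀ s, er.IsSignum g s → s = pa - pb) ∧
    (pa - pb) ∈ er.CC {g} ∧ pg = (pa - pb) ^ 2 ∧
    m = (pa - pb) * g ∧ m = g * (pa - pb) ∧
    g = (pa - pb) * m ∧ g = m * (pa - pb) ∧ pm = pg := by
  obtain ⟨⟨h, hE, h2⟩, hqa, hcv⟩ := hAH
  have twoc : ∀ {x y : R}, x + x = y + y → x = y := fun hxy => ERing.two_cancel h2 hxy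
  have hmG : m ∈ er.G := hm.1
  have hm0 : m ∈ er.Epos := by
    have h0 : m - 0 ∈ er.Epos := hm.2.1
    rwa [sub_zero] at h0
  have hmk : m * m = g * g := by
    have := hm.2.2
    rwa [pow_two, pow_two] at this
  obtain ⟨habs_uniq, hmg, hmcc⟩ := ERing.abs_canon h2 hE hqa hcv hg hm
  -- identify the absolute values in the positive/negative parts
  have absEq : ∀ m' : R, er.IsAbs g m' → m' = m := by
    intro m' hm'
    refine habs_uniq m' hm'.1 ?_ ?_
    · have h0 : m' - 0 ∈ er.Epos := hm'.2.1
      rwa [sub_zero] at h0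
    · have := hm'.2.2
      rwa [pow_two, pow_two] at this
  have haG : a ∈ er.G := ha.1
  have hbG : b ∈ er.G := hb.1
  have ha2 : a + a = m + g := by
    obtain ⟨_, m1, hm1, ha2⟩ := ha
    rwa [absEq m1 hm1] at ha2
  have hb2 : b + b = m - g := by
    obtain ⟨_, m1, hm1, hb2⟩ := hb
    rwa [absEq m1 hm1] at hb2
  -- basic products
  have hab : a * b = 0 := by
    have e1 : (a + a) * (b + b) = (a * b + a * b) + (a * b + a * b) := by noncomm_ring
    have e2 : (m + g) * (m - g) = (m * m - g * g) + (g * m - m * g) := by noncomm_ring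
    have e3 : (a * b + a * b) + (a * b + a * b) = 0 := by
      rw [← e1, ha2, hb2, e2, hmk, hmg]; abel
    have s1 : a * b + a * b = 0 := twoc (by rw [e3, add_zero])
    exact twoc (by rw [s1, add_zero])
  have hba : b * a = 0 := by
    have e1 : (b + b) * (a + a) = (b * a + b * a) + (b * a + b * a) := by noncomm_ring
    have e2 : (m - g) * (m + g) = (m * m - g * g) + (m * g - g * m) := by noncomm_ring
    have e3 : (b * a + b * a) + (b * a + b * a) = 0 := by
      rw [← e1, ha2, hb2, e2, hmk, hmg]; abel
    have s1 : b * a + b * a = 0 := twoc (by rw [e3, add_zero])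
    exact twoc (by rw [s1, add_zero])
  have hamb : a + b = m := by
    apply twoc
    rw [show (a + b) + (a + b) = (a + a) + (b + b) from by abel, ha2, hb2]; abel
  have hagb : a - b = g := by
    apply twoc
    rw [show (a - b) + (a - b) = (a + a) - (b + b) from by abel, ha2, hb2]; abel
  -- carrier projections
  have paG : pa ∈ er.G := hpa.1.1
  have pbG : pb ∈ er.G := hpb.1.1
  have pa_idem : pa * pa = pa := ERing.P.idem hpa.1
  have pb_idem : pb * pb = pb := ERing.P.idem hpb.1
  have a_pa : a * pa = a := ERing.Carrier.mul_p hpa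
  have pa_a : pa * a = a := ERing.Carrier.p_mul hqa haG hpa
  have b_pb : b * pb = b := ERing.Carrier.mul_p hpb
  have pb_b : pb * b = b := ERing.Carrier.p_mul hqa hbG hpb
  have pa_b : pa * b = 0 := (hpa.2 b hbG).1 hab
  have b_pa : b * pa = 0 := ERing.mul_zero_symm hqa paG hbG pa_b
  have pb_a : pb * a = 0 := (hpb.2 a haG).1 hba
  have a_pb : a * pb = 0 := ERing.mul_zero_symm hqa pbG haG pb_a
  have pb_pa : pb * pa = 0 := (hpb.2 pa paG).1 b_pa
  have pa_pb : pa * pb = 0 := ERing.mul_zero_symm hqa pbG paG pb_pa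
  -- positivity of parts
  have aEpos : a ∈ er.Epos := by
    have e : pa * m * pa = a := by
      rw [← hamb, mul_add, pa_a, pa_b, add_zero, a_pa]
    exact e ▸ ERing.Epos.conj (ERing.P.Epos hpa.1) hm0
  have bEpos : b ∈ er.Epos := by
    have e : pb * m * pb = b := by
      rw [← hamb, mul_add, pb_a, pb_b, zero_add, b_pb]
    exact e ▸ ERing.Epos.conj (ERing.P.Epos hpb.1) hm0
  have ham : a * m = a * a := by rw [← hamb, mul_add, hab, add_zero]
  have hbm : b * m = b * b := by rw [← hamb, mul_add, hba, zero_add]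
  -- the projection q = pa + pb is the carrier of m
  have q_idem : (pa + pb) * (pa + pb) = pa + pb := by
    rw [mul_add, add_mul, add_mul, pa_idem, pb_idem, pa_pb, pb_pa]; abel
  have qG : pa + pb ∈ er.G := ERing.G.add paG pbG
  have qP : pa + pb ∈ er.P := ⟨qG, by rw [pow_two, q_idem]⟩
  have key_ann : ∀ x ∈ er.G, m * x = 0 → pa * x = 0 ∧ pb * x = 0 := by
    intro x hx hmx
    have hax : a * x = 0 := by
      have e0 : a * a * x = 0 := by rw [← ham, mul_assoc, hmx, mul_zero]
      have e1 : x * a ^ 2 * x = 0 := by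
        rw [pow_two, mul_assoc, e0, mul_zero]
      exact (hqa x hx a haG e1).2
    have hbx : b * x = 0 := by
      have e0 : b * b * x = 0 := by rw [← hbm, mul_assoc, hmx, mul_zero]
      have e1 : x * b ^ 2 * x = 0 := by
        rw [pow_two, mul_assoc, e0, mul_zero]
      exact (hqa x hx b hbG e1).2
    exact ⟨(hpa.2 x hx).1 hax, (hpb.2 x hx).1 hbx⟩
  have key_split : ∀ x : R, (pa + pb) * x = 0 → pa * x = 0 ∧ pb * x = 0 := by
    intro x hqx
    constructor
    · have e : pa * ((pa + pb) * x) = pa * x := by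
        rw [← mul_assoc, mul_add, pa_idem, pa_pb, add_zero]
      rw [hqx, mul_zero] at e
      exact e.symm
    · have e : pb * ((pa + pb) * x) = pb * x := by
        rw [← mul_assoc, mul_add, pb_idem, pb_pa, zero_add]
      rw [hqx, mul_zero] at e
      exact e.symm
  have hcarrmq : er.IsCarrier m (pa + pb) := by
    refine ⟨qP, fun x hx => ⟨fun hmx => ?_, fun hqx => ?_⟩⟩
    · obtain ⟨h1, h2'⟩ := key_ann x hx hmx
      rw [add_mul, h1, h2', add_zero]
    · obtain ⟨h1, h2'⟩ := key_split x hqx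
      have hax : a * x = 0 := (hpa.2 x hx).2 h1
      have hbx : b * x = 0 := (hpb.2 x hx).2 h2'
      rw [← hamb, add_mul, hax, hbx, add_zero]
  have hqpm : pa + pb = pm := ERing.Carrier.unique hqa hcarrmq hpm
  -- carriers of g and m coincide
  have gm_iff : ∀ x ∈ er.G, (g * x = 0 ↔ m * x = 0) := by
    intro x hx
    constructor
    · intro hgx
      have e0 : g * g * x = 0 := by rw [mul_assoc, hgx, mul_zero]
      have e1 : x * m ^ 2 * x = 0 := by
        rw [pow_two, hmk, mul_assoc, e0, mul_zero]
      exact (hqa x hx m hmG e1).2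
    · intro hmx
      have e0 : m * m * x = 0 := by rw [mul_assoc, hmx, mul_zero]
      have e1 : x * g ^ 2 * x = 0 := by
        rw [pow_two, ← hmk, mul_assoc, e0, mul_zero]
      exact (hqa x hx g hg e1).2
  have hcarrmpg : er.IsCarrier m pg :=
    ⟨hpg.1, fun x hx => (gm_iff x hx).symm.trans (hpg.2 x hx)⟩
  have hpmpg : pm = pg := ERing.Carrier.unique hqa hpm hcarrmpg
  -- the signum
  have sG : pa - pb ∈ er.G := ERing.G.sub paG pbG
  have ssq : (pa - pb) * (pa - pb) = pa + pb := by
    rw [mul_sub, sub_mul, sub_mul, pa_idem, pb_idem, pa_pb, pb_pa]; abel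
  have hsg : (pa - pb) * g = m := by
    rw [← hagb, ← hamb, mul_sub, sub_mul, sub_mul, pa_a, pa_b, pb_a, pb_b]; abel
  have hgs : g * (pa - pb) = m := by
    rw [← hagb, ← hamb, sub_mul, mul_sub, mul_sub, a_pa, a_pb, b_pa, b_pb]; abel
  have g_pg : g * pg = g := ERing.Carrier.mul_p hpg
  have pg_g : pg * g = g := ERing.Carrier.p_mul hqa hg hpg
  have hqg : (pa + pb) * g = g := by rw [hqpm, hpmpg, pg_g]
  have hgq : g * (pa + pb) = g := by rw [hqpm, hpmpg, g_pg]
  -- commutation of pa, pb with the commutant of g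
  have hpaCC : ∀ x ∈ er.G, x * g = g * x → pa * x = x * pa := by
    intro x hx hxg
    have hxm : x * m = m * x := hmcc x hx hxg
    have hxa : x * a = a * x := by
      apply twoc
      calc x * a + x * a = x * (a + a) := (mul_add x a a).symm
        _ = x * (m + g) := by rw [ha2]
        _ = m * x + g * x := by rw [mul_add, hxm, hxg]
        _ = (m + g) * x := (add_mul m g x).symm
        _ = (a + a) * x := by rw [← ha2]
        _ = a * x + a * x := add_mul a a x
    exact ERing.Carrier.comm hqa haG hpa hx hxa
  have hpbCC : ∀ x ∈ er.G, x * g = g * x → pb * x = x * pb := by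
    intro x hx hxg
    have hxm : x * m = m * x := hmcc x hx hxg
    have hxb : x * b = b * x := by
      apply twoc
      calc x * b + x * b = x * (b + b) := (mul_add x b b).symm
        _ = x * (m - g) := by rw [hb2]
        _ = m * x - g * x := by rw [mul_sub, hxm, hxg]
        _ = (m - g) * x := (sub_mul m g x).symm
        _ = (b + b) * x := by rw [← hb2]
        _ = b * x + b * x := add_mul b b x
    exact ERing.Carrier.comm hqa hbG hpb hx hxb
  -- assemble
  have hsigcomm : ∀ x ∈ er.G, x * g = g * x → (pa - pb) * x = x * (pa - pb) := by
    intro x hx hxg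
    rw [sub_mul, mul_sub, hpaCC x hx hxg, hpbCC x hx hxg]
  have hsig : er.IsSignum g (pa - pb) := by
    refine ⟨⟨sG, ?_⟩, ⟨sG, ?_⟩, ?_, ?_, ?_, ?_⟩
    · intro x hx
      have hxg : x = g := hx
      rw [hxg, hsg, hgs]
    · rintro x ⟨hxP, hxG, hxC⟩
      exact hsigcomm x hxG (hxC g rfl)
    · show (pa - pb) * g - 0 ∈ er.Epos
      rw [hsg, sub_zero]
      exact hm0
    · rw [hsg, hgs]
    · rw [pow_two, mul_assoc, ← mul_assoc, ssq, hqg]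
    · intro x hx hgx
      have hmx : m * x = 0 := (gm_iff x hx).1 hgx
      obtain ⟨h1, h2'⟩ := key_ann x hx hmx
      rw [sub_mul, h1, h2', sub_zero]
  refine ⟨hsig, ?_, ⟨sG, fun x hx => hsigcomm x hx.1 (hx.2 g rfl)⟩, ?_, hsg.symm, hgs.symm,
      ?_, ?_, hpmpg⟩
  · -- uniqueness
    intro s hs
    obtain ⟨⟨hsG', hsg'⟩, hsP', hspos', hsc', hssq', hsann'⟩ := hs
    have hnG : s * g ∈ er.G := ERing.G.mul_comm h2 hE hsG' hg hsc'
    have hn0 : s * g ∈ er.Epos := by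
      have h0 : s * g - 0 ∈ er.Epos := hspos'
      rwa [sub_zero] at h0
    have hnk : (s * g) * (s * g) = g * g := by
      calc (s * g) * (s * g) = s * (g * s) * g := by noncomm_ring
        _ = s * (s * g) * g := by rw [← hsc']
        _ = (s ^ 2 * g) * g := by rw [pow_two]; noncomm_ring
        _ = g * g := by rw [← hssq']
    have hnm : s * g = m := habs_uniq (s * g) hnG hn0 hnk
    have hdg : (s - (pa - pb)) * g = 0 := by rw [sub_mul, hnm, hsg, sub_self]
    have hgd : g * (s - (pa - pb)) = 0 := by
      rw [mul_sub, ← hsc', hnm, hgs, sub_self]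
    have hdG : s - (pa - pb) ∈ er.G := ERing.G.sub hsG' sG
    have h1 : s * (s - (pa - pb)) = 0 := hsann' _ hdG hgd
    have h2' : (pa - pb) * (s - (pa - pb)) = 0 := by
      have hmx : m * (s - (pa - pb)) = 0 := (gm_iff _ hdG).1 hgd
      obtain ⟨e1, e2⟩ := key_ann _ hdG hmx
      rw [sub_mul, e1, e2, sub_zero]
    have hdd : (s - (pa - pb)) * (s - (pa - pb)) = 0 := by
      have e : (s - (pa - pb)) * (s - (pa - pb))
          = s * (s - (pa - pb)) - (pa - pb) * (s - (pa - pb)) := by noncomm_ring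
      rw [e, h1, h2', sub_zero]
    exact sub_eq_zero.mp (ERing.sq_zero hqa hdG hdd)
  · rw [pow_two, ssq]
    exact (hqpm.trans hpmpg).symm
  · rw [← hsg, ← mul_assoc, ssq, hqg]
  · rw [← hgs, mul_assoc, ssq, hgq]
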